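/- For k ≥ 0, A^{k,1}(t) = 1 + t^{k+2} · [k choose 1]_t = 1 + t^{k+2}(1 + t + ... + t^{k-1}), and consequently the generating function for partitions inside the (k,1)-hook is (1 + t^{k+2}(1-t^k)/(1-t)) · ∏_{i=1}^{k+1} 1/(1-t^i). -/

import Mathlib

open PowerSeries Finset

/-- The `t`-Pochhammer symbol `(t;t)_n = ∏_{j=0}^{n-1} (1 - t·t^j)`. -/
noncomputable def qPoch (n : ℕ) : PowerSeries ℚ :=
  ∏ j ∈ Finset.range n, (1 - (PowerSeries.X : PowerSeries ℚ) ^ (j + 1))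

/-- The Gaussian binomial coefficient `[a choose b]_t = (t;t)_a / ((t;t)_b (t;t)_{a-b})`,
with the convention that it is `0` when `b > a`. -/
noncomputable def gaussBinom (a b : ℕ) : PowerSeries ℚ :=
  if b ≤ a then qPoch a * (qPoch b)⁻¹ * (qPoch (a - b))⁻¹ else 0

/-- `A^{k,ℓ}(t) = 1 + ∑_{i=1}^{ℓ} t^{i(k+ℓ+1)} [k choose i]_t
∑_{j=0}^{ℓ-i} t^{j(k-i+1)} [(i+j-1) choose j]_t`. -/
noncomputable def A (k l : ℕ) : PowerSeries ℚ :=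
  1 + ∑ i ∈ Finset.Icc 1 l,
    (PowerSeries.X : PowerSeries ℚ) ^ (i * (k + l + 1)) * gaussBinom k i *
      ∑ j ∈ Finset.range (l - i + 1),
        (PowerSeries.X : PowerSeries ℚ) ^ (j * (k - i + 1)) * gaussBinom (i + j - 1) j

/-- A partition fits inside the `(k,ℓ)`-hook iff at most `k` of its parts exceed `ℓ`,
i.e. `λ_{k+i} ≤ ℓ` for all `i ≥ 1`. -/
def InHook (k l : ℕ) {n : ℕ} (p : Nat.Partition n) : Prop :=
  (p.parts.filter (fun x => l < x)).card ≤ k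

/-- `G_{k,ℓ}(t) = ∑_λ t^{|λ|}` over partitions fitting inside the `(k,ℓ)`-hook. -/
noncomputable def hookGF (k l : ℕ) : PowerSeries ℚ :=
  PowerSeries.mk fun n => (Nat.card {p : Nat.Partition n // InHook k l p} : ℚ)


lemma constCoeff_one_sub_X_pow (i : ℕ) (hi : 1 ≤ i) :
    constantCoeff (1 - (X : PowerSeries ℚ) ^ i) = 1 := by
  rw [map_sub, map_one, map_pow, constantCoeff_X, zero_pow (by omega), sub_zero]

lemma constCoeff_qPoch (n : ℕ) : constantCoeff (qPoch n) = 1 := by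
  rw [qPoch, map_prod]
  rw [Finset.prod_eq_one]
  intro j _
  exact constCoeff_one_sub_X_pow _ (by omega)

lemma qPoch_mul_inv (n : ℕ) : qPoch n * (qPoch n)⁻¹ = 1 :=
  PowerSeries.mul_inv_cancel _ (by rw [constCoeff_qPoch]; exact one_ne_zero)

lemma gaussBinom_self (a : ℕ) : gaussBinom a a = qPoch a * (qPoch a)⁻¹ * (qPoch 0)⁻¹ := by
  simp [gaussBinom]

lemma qPoch_zero : qPoch 0 = 1 := by simp [qPoch]

lemma gaussBinom_zero (a : ℕ) : gaussBinom a 0 = 1 := by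
  simp [gaussBinom, qPoch_zero, inv_one, qPoch_mul_inv]

lemma one_sub_X_inv_geom (k : ℕ) :
    (1 - (X : PowerSeries ℚ)) * ∑ j ∈ Finset.range k, (X : PowerSeries ℚ) ^ j
      = 1 - X ^ k := by
  have h := mul_geom_sum (X : PowerSeries ℚ) k
  linear_combination -h

lemma gaussBinom_one (k : ℕ) :
    gaussBinom k 1 = ∑ j ∈ Finset.range k, (X : PowerSeries ℚ) ^ j := by
  rcases Nat.eq_zero_or_pos k with rfl | hk
  · simp [gaussBinom]
  · rw [gaussBinom, if_pos (by omega : 1 ≤ k)]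
    have hq : qPoch k = qPoch (k - 1) * (1 - (X : PowerSeries ℚ) ^ k) := by
      obtain ⟨m, rfl⟩ : ∃ m, k = m + 1 := ⟨k - 1, by omega⟩
      rw [qPoch, qPoch, Finset.prod_range_succ]
      simp
    have h1 : qPoch 1 = 1 - (X : PowerSeries ℚ) := by simp [qPoch]
    rw [hq, h1]
    have hgeom : (1 - (X : PowerSeries ℚ) ^ k)
        = (1 - X) * ∑ j ∈ Finset.range k, (X : PowerSeries ℚ) ^ j :=
      (one_sub_X_inv_geom k).symm
    rw [hgeom]
    have hXunit : (1 - (X : PowerSeries ℚ)) * (1 - (X : PowerSeries ℚ))⁻¹ = 1 :=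
      PowerSeries.mul_inv_cancel _ (by
        have := constCoeff_one_sub_X_pow 1 le_rfl
        rw [pow_one] at this
        rw [this]
        exact one_ne_zero)
    calc qPoch (k-1) * ((1 - X) * ∑ j ∈ Finset.range k, (X : PowerSeries ℚ) ^ j)
          * (1 - X)⁻¹ * (qPoch (k - 1))⁻¹
        = (qPoch (k-1) * (qPoch (k-1))⁻¹) * ((1 - X) * (1-X)⁻¹)
            * ∑ j ∈ Finset.range k, (X : PowerSeries ℚ) ^ j := by ring
      _ = _ := by rw [qPoch_mul_inv, hXunit, one_mul, one_mul]

lemma A_k1 (k : ℕ) : A k 1 = 1 + (X : PowerSeries ℚ) ^ (k + 2) * gaussBinom k 1 := by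
  rw [A, Finset.Icc_self, Finset.sum_singleton]
  norm_num [gaussBinom_zero]

-- auxiliary multiset lemmas
lemma msum_map_sub (c : ℕ) (s : Multiset ℕ) (h : ∀ x ∈ s, c ≤ x) :
    (s.map (· - c)).sum + c * Multiset.card s = s.sum := by
  induction s using Multiset.induction_on with
  | empty => simp
  | cons a t ih =>
    simp only [Multiset.map_cons, Multiset.sum_cons, Multiset.card_cons]
    have ha : c ≤ a := h a (Multiset.mem_cons_self a t)
    have := ih (fun x hx => h x (Multiset.mem_cons_of_mem hx))
    rw [Nat.mul_succ]
    omega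

lemma filter_le_one_eq_replicate {n : ℕ} (p : n.Partition) :
    p.parts.filter (fun x => ¬ 1 < x) = Multiset.replicate
      (Multiset.card (p.parts.filter (fun x => ¬ 1 < x))) 1 := by
  rw [Multiset.eq_replicate_card]
  intro x hx
  have h1 := Multiset.of_mem_filter hx
  have h2 := p.parts_pos (Multiset.mem_of_mem_filter hx)
  omega

-- partitions with at most j parts
noncomputable def cntLE (j n : ℕ) : ℕ :=
  (Finset.univ.filter (fun p : n.Partition => Multiset.card p.parts ≤ j)).card

lemma cntLE_zero (n : ℕ) : cntLE 0 n = if n = 0 then 1 else 0 := by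
  rcases eq_or_ne n 0 with rfl | hn
  · rw [if_pos rfl, cntLE]
    rw [Finset.card_eq_one]
    refine ⟨default, ?_⟩
    rw [Finset.eq_singleton_iff_unique_mem]
    constructor
    · simp [Nat.Partition.partition_zero_parts]
    · intro p _
      exact Subsingleton.elim p default
  · rw [if_neg hn, cntLE, Finset.card_eq_zero]
    rw [Finset.filter_eq_empty_iff]
    intro p _
    simp only [Nat.le_zero, Multiset.card_eq_zero]
    intro hp
    exact hn (by rw [← p.parts_sum, hp, Multiset.sum_zero])

lemma msum_map_add (c : ℕ) (s : Multiset ℕ) :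
    (s.map (· + c)).sum = s.sum + c * Multiset.card s := by
  induction s using Multiset.induction_on with
  | empty => simp
  | cons a t ih =>
    simp only [Multiset.map_cons, Multiset.sum_cons, Multiset.card_cons, ih, Nat.mul_succ]
    omega

lemma card_le_sum_of_pos (s : Multiset ℕ) (h : ∀ x ∈ s, 1 ≤ x) :
    Multiset.card s ≤ s.sum := by
  have := msum_map_sub 1 s h
  omega

lemma card_exact (j n : ℕ) (h : j + 1 ≤ n) :
    (Finset.univ.filter (fun p : n.Partition => Multiset.card p.parts = j + 1)).card
      = cntLE (j + 1) (n - (j + 1)) := by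
  rw [cntLE]
  have sum_map : ∀ p : n.Partition, Multiset.card p.parts = j + 1 →
      (p.parts.map (· - 1)).sum = n - (j + 1) := by
    intro p hp
    have := msum_map_sub 1 p.parts (fun x hx => p.parts_pos hx)
    rw [hp, p.parts_sum] at this
    omega
  refine Finset.card_bij'
    (fun p hp => Nat.Partition.ofSums (n - (j+1)) (p.parts.map (· - 1))
      (sum_map p (Finset.mem_filter.1 hp).2))
    (fun q hq =>
      ⟨q.parts.map (· + 1) + Multiset.replicate (j + 1 - Multiset.card q.parts) 1,
       fun {i} hi => by
        rcases Multiset.mem_add.1 hi with h' | h'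
        · obtain ⟨a, _, rfl⟩ := Multiset.mem_map.1 h'
          omega
        · rw [Multiset.eq_of_mem_replicate h']; omega,
       by
        have hcard : Multiset.card q.parts ≤ j + 1 :=
          (Finset.mem_filter.1 hq).2
        rw [Multiset.sum_add, msum_map_add, Multiset.sum_replicate, q.parts_sum,
          smul_eq_mul]
        omega⟩)
    ?_ ?_ ?_ ?_
  · -- forward lands in target
    intro p hp
    have hp' := (Finset.mem_filter.1 hp).2
    simp only [Finset.mem_filter, Finset.mem_univ, true_and,
      Nat.Partition.ofSums_parts]
    calc Multiset.card (Multiset.filter (· ≠ 0) (p.parts.map (· - 1)))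
        ≤ Multiset.card (p.parts.map (· - 1)) :=
          Multiset.card_le_card (Multiset.filter_le _ _)
      _ = j + 1 := by rw [Multiset.card_map, hp']
  · -- backward lands in source
    intro q hq
    have hcard : Multiset.card q.parts ≤ j + 1 := (Finset.mem_filter.1 hq).2
    simp only [Finset.mem_filter, Finset.mem_univ, true_and, Multiset.card_add,
      Multiset.card_map, Multiset.card_replicate]
    omega
  · -- left inverse
    intro p hp
    have hp' := (Finset.mem_filter.1 hp).2
    apply Nat.Partition.ext
    simp only [Nat.Partition.ofSums_parts]
    have key : Multiset.filter (· ≠ 0) (p.parts.map (· - 1))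
        = (p.parts.filter (fun x => 1 < x)).map (· - 1) := by
      rw [Multiset.filter_map]
      congr 1
      apply Multiset.filter_congr
      intro x hx
      have := p.parts_pos hx
      simp only [Function.comp_apply, ne_eq]
      omega
    rw [key]
    have map_back : ((p.parts.filter (fun x => 1 < x)).map (· - 1)).map (· + 1)
        = p.parts.filter (fun x => 1 < x) := by
      rw [Multiset.map_map]
      have : ∀ x ∈ p.parts.filter (fun x => 1 < x),
          ((· + 1) ∘ (· - 1)) x = id x := by
        intro x hx
        have := Multiset.of_mem_filter hx
        simp only [Function.comp_apply, id_eq]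
        omega
      rw [Multiset.map_congr rfl this, Multiset.map_id]
    rw [map_back]
    have hrep := filter_le_one_eq_replicate p
    have hcards : Multiset.card (p.parts.filter (fun x => 1 < x))
        + Multiset.card (p.parts.filter (fun x => ¬ 1 < x))
        = j + 1 := by
      rw [← Multiset.card_add, Multiset.filter_add_not]
      exact hp'
    rw [Multiset.card_map]
    have : j + 1 - Multiset.card (p.parts.filter (fun x => 1 < x))
        = Multiset.card (p.parts.filter (fun x => ¬ 1 < x)) := by omega
    rw [this, ← hrep, Multiset.filter_add_not]
  · -- right inverse
    intro q hq
    apply Nat.Partition.ext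
    simp only [Nat.Partition.ofSums_parts, Multiset.map_add, Multiset.map_map]
    have h1 : ∀ x ∈ q.parts, ((· - 1) ∘ (· + 1)) x = id x := by
      intro x _; simp
    rw [Multiset.map_congr rfl h1, Multiset.map_id]
    have h2 : Multiset.map (· - 1)
        (Multiset.replicate (j + 1 - Multiset.card q.parts) 1)
        = Multiset.replicate (j + 1 - Multiset.card q.parts) 0 := by
      rw [Multiset.map_replicate]
    rw [h2, Multiset.filter_add]
    rw [Multiset.filter_eq_self.2 (fun x hx => by
      have := q.parts_pos hx; omega)]
    rw [Multiset.filter_eq_nil.2 (fun x hx => by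
      rw [Multiset.eq_of_mem_replicate hx]; simp)]
    rw [add_zero]

lemma cntLE_succ (j n : ℕ) :
    cntLE (j + 1) n = cntLE j n + (if j + 1 ≤ n then cntLE (j + 1) (n - (j + 1)) else 0) := by
  have hsplit : (Finset.univ.filter (fun p : n.Partition => Multiset.card p.parts ≤ j + 1))
      = (Finset.univ.filter (fun p : n.Partition => Multiset.card p.parts ≤ j))
        ∪ (Finset.univ.filter (fun p : n.Partition => Multiset.card p.parts = j + 1)) := by
    ext p
    simp only [Finset.mem_filter, Finset.mem_univ, true_and, Finset.mem_union]
    omega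
  have hdisj : Disjoint
      (Finset.univ.filter (fun p : n.Partition => Multiset.card p.parts ≤ j))
      (Finset.univ.filter (fun p : n.Partition => Multiset.card p.parts = j + 1)) := by
    rw [Finset.disjoint_left]
    intro p h1 h2
    simp only [Finset.mem_filter, Finset.mem_univ, true_and] at h1 h2
    omega
  rw [cntLE, hsplit, Finset.card_union_of_disjoint hdisj]
  congr 1
  split_ifs with h
  · exact card_exact j n h
  · rw [Finset.card_eq_zero, Finset.filter_eq_empty_iff]
    intro p _
    intro hp
    have h1 : Multiset.card p.parts ≤ n := by
      have := card_le_sum_of_pos p.parts (fun x hx => p.parts_pos hx)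
      rw [p.parts_sum] at this
      exact this
    omega

noncomputable def serLE (j : ℕ) : PowerSeries ℚ := PowerSeries.mk fun n => (cntLE j n : ℚ)

lemma constCoeff_one_sub_X_pow' (i : ℕ) (hi : 1 ≤ i) :
    constantCoeff (1 - (X : PowerSeries ℚ) ^ i) = 1 := by
  rw [map_sub, map_one, map_pow, constantCoeff_X, zero_pow (by omega), sub_zero]

lemma one_sub_X_pow_unit (i : ℕ) (hi : 1 ≤ i) :
    (1 - (X : PowerSeries ℚ) ^ i) * (1 - (X : PowerSeries ℚ) ^ i)⁻¹ = 1 :=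
  PowerSeries.mul_inv_cancel _ (by rw [constCoeff_one_sub_X_pow' i hi]; exact one_ne_zero)

lemma serLE_eq (j : ℕ) :
    serLE j = ∏ i ∈ Finset.Icc 1 j, (1 - (X : PowerSeries ℚ) ^ i)⁻¹ := by
  induction j with
  | zero =>
    rw [show Finset.Icc 1 0 = ∅ by rfl, Finset.prod_empty]
    ext n
    simp [serLE, cntLE_zero, PowerSeries.coeff_one, apply_ite (Nat.cast : ℕ → ℚ)]
  | succ j ih =>
    have hrec : serLE (j + 1) = serLE j + X ^ (j + 1) * serLE (j + 1) := by
      ext n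
      simp only [serLE, map_add, coeff_mk, PowerSeries.coeff_X_pow_mul']
      rw [cntLE_succ j n]
      split_ifs with h <;> simp [coeff_mk]
    have hmul : serLE (j + 1) * (1 - X ^ (j + 1)) = serLE j := by
      rw [mul_sub, mul_one, sub_eq_iff_eq_add, mul_comm]
      linear_combination hrec
    rw [Finset.prod_Icc_succ_top (by omega : 1 ≤ j + 1), ← ih, ← hmul]
    rw [mul_assoc, one_sub_X_pow_unit (j + 1) (by omega), mul_one]

noncomputable def cntBig (j n : ℕ) : ℕ :=
  (Finset.univ.filter
    (fun p : n.Partition => Multiset.card (p.parts.filter (fun x => 1 < x)) = j)).card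

lemma ones_sum {n : ℕ} (p : n.Partition) :
    (p.parts.filter (fun x => ¬ 1 < x)).sum
      = Multiset.card (p.parts.filter (fun x => ¬ 1 < x)) := by
  conv_lhs => rw [filter_le_one_eq_replicate p]
  rw [Multiset.sum_replicate, smul_eq_mul, mul_one]

lemma bigs_sum_ge {n : ℕ} (p : n.Partition) :
    2 * Multiset.card (p.parts.filter (fun x => 1 < x))
      ≤ (p.parts.filter (fun x => 1 < x)).sum := by
  have := msum_map_sub 2 (p.parts.filter (fun x => 1 < x))
    (fun x hx => by have := Multiset.of_mem_filter hx; omega)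
  omega

lemma parts_split {n : ℕ} (p : n.Partition) :
    (p.parts.filter (fun x => 1 < x)).sum
      + Multiset.card (p.parts.filter (fun x => ¬ 1 < x)) = n := by
  rw [← ones_sum p, ← Multiset.sum_add, Multiset.filter_add_not, p.parts_sum]

lemma cntBig_small (j n : ℕ) (h : n < 2 * j) : cntBig j n = 0 := by
  rw [cntBig, Finset.card_eq_zero, Finset.filter_eq_empty_iff]
  intro p _ hp
  have h1 := bigs_sum_ge p
  have h2 := parts_split p
  omega

lemma cntBig_eq_sum (j n : ℕ) (h : 2 * j ≤ n) :
    cntBig j n = ∑ ab ∈ Finset.HasAntidiagonal.antidiagonal (n - 2 * j), cntLE j ab.2 := by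
  rw [cntBig]
  rw [Finset.card_eq_sum_card_fiberwise
    (f := fun p : n.Partition =>
      (Multiset.card (p.parts.filter (fun x => ¬ 1 < x)),
       (p.parts.filter (fun x => 1 < x)).sum - 2 * j))
    (t := Finset.HasAntidiagonal.antidiagonal (n - 2 * j))
    (by
      intro p hp
      have hp' := (Finset.mem_filter.1 hp).2
      have h1 := bigs_sum_ge p
      have h2 := parts_split p
      rw [Finset.mem_coe, Finset.HasAntidiagonal.mem_antidiagonal]
      dsimp only
      omega)]
  apply Finset.sum_congr rfl
  rintro ⟨m, b⟩ hmb
  rw [Finset.HasAntidiagonal.mem_antidiagonal] at hmb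
  simp only [Finset.filter_filter]
  -- now the bijection with partitions of b into at most j parts
  have key : ∀ p : n.Partition,
      (Multiset.card (p.parts.filter (fun x => 1 < x)) = j ∧
        Multiset.card (p.parts.filter (fun x => ¬ 1 < x)) = m ∧
        (p.parts.filter (fun x => 1 < x)).sum - 2 * j = b) →
      ((p.parts.filter (fun x => 1 < x)).map (· - 2)).sum = b := by
    rintro p ⟨h1, h2, h3⟩
    have h4 := bigs_sum_ge p
    have h5 := parts_split p
    have h6 := msum_map_sub 2 (p.parts.filter (fun x => 1 < x))
      (fun x hx => by have := Multiset.of_mem_filter hx; omega)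
    omega
  rw [cntLE]
  refine Finset.card_bij'
    (fun p hp => Nat.Partition.ofSums b ((p.parts.filter (fun x => 1 < x)).map (· - 2))
      (key p (by
        have := (Finset.mem_filter.1 hp).2
        exact ⟨this.1, by
          have := this.2
          simp only [Prod.mk.injEq] at this
          exact this⟩)))
    (fun q hq =>
      ⟨Multiset.replicate m 1 + (q.parts.map (· + 2)
          + Multiset.replicate (j - Multiset.card q.parts) 2),
       fun {i} hi => by
        rcases Multiset.mem_add.1 hi with h' | h'
        · rw [Multiset.eq_of_mem_replicate h']; omega
        · rcases Multiset.mem_add.1 h' with h'' | h''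
          · obtain ⟨a, _, rfl⟩ := Multiset.mem_map.1 h''
            omega
          · rw [Multiset.eq_of_mem_replicate h'']; omega,
       by
        have hcard : Multiset.card q.parts ≤ j := (Finset.mem_filter.1 hq).2
        rw [Multiset.sum_add, Multiset.sum_add, msum_map_add, Multiset.sum_replicate,
          Multiset.sum_replicate, q.parts_sum, smul_eq_mul, smul_eq_mul]
        omega⟩)
    ?_ ?_ ?_ ?_
  · intro p hp
    have hp' := (Finset.mem_filter.1 hp).2.1
    simp only [Finset.mem_filter, Finset.mem_univ, true_and, Nat.Partition.ofSums_parts]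
    calc Multiset.card
          (Multiset.filter (· ≠ 0) ((p.parts.filter (fun x => 1 < x)).map (· - 2)))
        ≤ Multiset.card ((p.parts.filter (fun x => 1 < x)).map (· - 2)) :=
          Multiset.card_le_card (Multiset.filter_le _ _)
      _ = j := by rw [Multiset.card_map, hp']
  · intro q hq
    have hcard : Multiset.card q.parts ≤ j := (Finset.mem_filter.1 hq).2
    simp only [Finset.mem_filter, Finset.mem_univ, true_and, Prod.mk.injEq]
    have hbigs : (Multiset.replicate m 1 + (q.parts.map (· + 2)
          + Multiset.replicate (j - Multiset.card q.parts) 2)).filter (fun x => 1 < x)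
        = q.parts.map (· + 2) + Multiset.replicate (j - Multiset.card q.parts) 2 := by
      rw [Multiset.filter_add, Multiset.filter_add]
      rw [Multiset.filter_eq_nil.2 (fun x hx => by
        rw [Multiset.eq_of_mem_replicate hx]; omega)]
      rw [Multiset.filter_eq_self.2 (fun x hx => by
        obtain ⟨a, _, rfl⟩ := Multiset.mem_map.1 hx; omega)]
      rw [Multiset.filter_eq_self.2 (fun x hx => by
        rw [Multiset.eq_of_mem_replicate hx]; omega)]
      rw [zero_add]
    have hones : (Multiset.replicate m 1 + (q.parts.map (· + 2)
          + Multiset.replicate (j - Multiset.card q.parts) 2)).filter (fun x => ¬ 1 < x)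
        = Multiset.replicate m 1 := by
      rw [Multiset.filter_add, Multiset.filter_add]
      rw [Multiset.filter_eq_self.2 (fun x hx => by
        rw [Multiset.eq_of_mem_replicate hx]; omega)]
      rw [Multiset.filter_eq_nil.2 (fun x hx => by
        obtain ⟨a, _, rfl⟩ := Multiset.mem_map.1 hx; omega)]
      rw [Multiset.filter_eq_nil.2 (fun x hx => by
        rw [Multiset.eq_of_mem_replicate hx]; omega)]
      rw [add_zero, add_zero]
    refine ⟨?_, ?_, ?_⟩
    · rw [hbigs, Multiset.card_add, Multiset.card_map, Multiset.card_replicate]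
      omega
    · rw [hones, Multiset.card_replicate]
    · rw [hbigs, Multiset.sum_add, msum_map_add, Multiset.sum_replicate, q.parts_sum,
        smul_eq_mul]
      omega
  · -- left inverse
    intro p hp
    obtain ⟨h1, h2⟩ := (Finset.mem_filter.1 hp).2
    simp only [Prod.mk.injEq] at h2
    apply Nat.Partition.ext
    simp only [Nat.Partition.ofSums_parts]
    have key2 : Multiset.filter (· ≠ 0) ((p.parts.filter (fun x => 1 < x)).map (· - 2))
        = ((p.parts.filter (fun x => 1 < x)).filter (fun x => 2 < x)).map (· - 2) := by
      rw [Multiset.filter_map]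
      congr 1
      apply Multiset.filter_congr
      intro x hx
      have := Multiset.of_mem_filter hx
      simp only [Function.comp_apply, ne_eq]
      omega
    rw [key2]
    have map_back : (((p.parts.filter (fun x => 1 < x)).filter (fun x => 2 < x)).map
          (· - 2)).map (· + 2)
        = (p.parts.filter (fun x => 1 < x)).filter (fun x => 2 < x) := by
      rw [Multiset.map_map]
      have : ∀ x ∈ (p.parts.filter (fun x => 1 < x)).filter (fun x => 2 < x),
          ((· + 2) ∘ (· - 2)) x = id x := by
        intro x hx
        have := Multiset.of_mem_filter hx
        simp only [Function.comp_apply, id_eq]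
        omega
      rw [Multiset.map_congr rfl this, Multiset.map_id]
    rw [map_back, Multiset.card_map]
    have hsplit2 : Multiset.card ((p.parts.filter (fun x => 1 < x)).filter (fun x => 2 < x))
        + Multiset.card ((p.parts.filter (fun x => 1 < x)).filter (fun x => ¬ 2 < x))
        = j := by
      rw [← Multiset.card_add, Multiset.filter_add_not]
      exact h1
    have hrep2 : (p.parts.filter (fun x => 1 < x)).filter (fun x => ¬ 2 < x)
        = Multiset.replicate
          (Multiset.card ((p.parts.filter (fun x => 1 < x)).filter (fun x => ¬ 2 < x))) 2 := by
      rw [Multiset.eq_replicate_card]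
      intro x hx
      have hx1 := Multiset.of_mem_filter hx
      have hx2 := Multiset.of_mem_filter (Multiset.mem_of_mem_filter hx)
      omega
    have hj : j - Multiset.card ((p.parts.filter (fun x => 1 < x)).filter (fun x => 2 < x))
        = Multiset.card ((p.parts.filter (fun x => 1 < x)).filter (fun x => ¬ 2 < x)) := by
      omega
    rw [hj, ← hrep2]
    have hones2 : Multiset.replicate m 1 = p.parts.filter (fun x => ¬ 1 < x) := by
      rw [filter_le_one_eq_replicate p, h2.1]
    rw [hones2, Multiset.filter_add_not, add_comm]
    exact Multiset.filter_add_not _ _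
  · -- right inverse
    intro q hq
    apply Nat.Partition.ext
    simp only [Nat.Partition.ofSums_parts]
    have hbigs : (Multiset.replicate m 1 + (q.parts.map (· + 2)
          + Multiset.replicate (j - Multiset.card q.parts) 2)).filter (fun x => 1 < x)
        = q.parts.map (· + 2) + Multiset.replicate (j - Multiset.card q.parts) 2 := by
      rw [Multiset.filter_add, Multiset.filter_add]
      rw [Multiset.filter_eq_nil.2 (fun x hx => by
        rw [Multiset.eq_of_mem_replicate hx]; omega)]
      rw [Multiset.filter_eq_self.2 (fun x hx => by
        obtain ⟨a, _, rfl⟩ := Multiset.mem_map.1 hx; omega)]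
      rw [Multiset.filter_eq_self.2 (fun x hx => by
        rw [Multiset.eq_of_mem_replicate hx]; omega)]
      rw [zero_add]
    rw [hbigs, Multiset.map_add, Multiset.map_map]
    have h1 : ∀ x ∈ q.parts, ((· - 2) ∘ (· + 2)) x = id x := by
      intro x _; simp
    rw [Multiset.map_congr rfl h1, Multiset.map_id, Multiset.map_replicate]
    rw [Multiset.filter_add]
    rw [Multiset.filter_eq_self.2 (fun x hx => by
      have := q.parts_pos hx; omega)]
    rw [Multiset.filter_eq_nil.2 (fun x hx => by
      rw [Multiset.eq_of_mem_replicate hx]; simp)]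
    rw [add_zero]

lemma one_sub_X_inv : (1 - (X : PowerSeries ℚ))⁻¹ = PowerSeries.mk fun _ => (1 : ℚ) := by
  rw [PowerSeries.inv_eq_iff_mul_eq_one (by
    have : constantCoeff (1 - (X : PowerSeries ℚ)) = 1 := by
      have := constCoeff_one_sub_X_pow' 1 le_rfl
      rwa [pow_one] at this
    rw [this]; exact one_ne_zero)]
  ext n
  rw [mul_sub, mul_one]
  cases n with
  | zero => simp
  | succ n =>
    rw [map_sub, coeff_mk, mul_comm, PowerSeries.coeff_succ_X_mul, coeff_mk]
    simp

lemma serBig_eq (j : ℕ) :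
    (PowerSeries.mk fun n => (cntBig j n : ℚ))
      = (X : PowerSeries ℚ) ^ (2 * j) * ((1 - X)⁻¹ * serLE j) := by
  ext n
  rw [coeff_mk, PowerSeries.coeff_X_pow_mul']
  split_ifs with h
  · rw [one_sub_X_inv, cntBig_eq_sum j n h, PowerSeries.coeff_mul]
    push_cast
    apply Finset.sum_congr rfl
    rintro ⟨a, b⟩ _
    rw [serLE, coeff_mk, coeff_mk, one_mul]
  · rw [cntBig_small j n (by omega)]
    simp

lemma hookGF_eq_sum (k : ℕ) :
    hookGF k 1 = ∑ j ∈ Finset.range (k + 1), PowerSeries.mk fun n => (cntBig j n : ℚ) := by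
  ext n
  rw [hookGF, coeff_mk, map_sum]
  simp only [coeff_mk]
  rw [← Nat.cast_sum]
  congr 1
  haveI : DecidablePred (InHook k 1 (n := n)) :=
    fun p => decidable_of_iff ((p.parts.filter (fun x => 1 < x)).card ≤ k) Iff.rfl
  rw [Nat.card_eq_fintype_card (α := {p : n.Partition // InHook k 1 p}), Fintype.card_subtype]
  rw [Finset.card_eq_sum_card_fiberwise
    (f := fun p : n.Partition => Multiset.card (p.parts.filter (fun x => 1 < x)))
    (t := Finset.range (k + 1))
    (by
      intro p hp
      have := (Finset.mem_filter.1 hp).2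
      rw [Finset.mem_coe, Finset.mem_range]
      exact Nat.lt_succ_of_le this)]
  apply Finset.sum_congr rfl
  intro j hj
  rw [Finset.mem_range] at hj
  rw [cntBig]
  congr 1
  ext p
  simp only [Finset.mem_filter, Finset.mem_univ, true_and, InHook]
  constructor
  · rintro ⟨_, h2⟩; exact h2
  · intro h2; exact ⟨(Finset.mem_filter (p := InHook k 1)).2 ⟨Finset.mem_univ p, (show Multiset.card (p.parts.filter (fun x => 1 < x)) ≤ k by omega)⟩, h2⟩

lemma poly_id (k : ℕ) :
    ∑ j ∈ Finset.range (k + 1),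
        (X : PowerSeries ℚ) ^ (2 * j) * ∏ i ∈ Finset.Icc (j + 1) (k + 1), (1 - X ^ i)
      = 1 - X + X ^ (k + 2) - X ^ (2 * k + 2) := by
  induction k with
  | zero =>
    rw [Finset.sum_range_one]
    norm_num
  | succ k ih =>
    rw [Finset.sum_range_succ]
    have hstep : ∀ j ∈ Finset.range (k + 1),
        (X : PowerSeries ℚ) ^ (2 * j) * ∏ i ∈ Finset.Icc (j + 1) (k + 2), (1 - X ^ i)
          = ((X : PowerSeries ℚ) ^ (2 * j) * ∏ i ∈ Finset.Icc (j + 1) (k + 1), (1 - X ^ i))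
            * (1 - X ^ (k + 2)) := by
      intro j hj
      rw [Finset.mem_range] at hj
      rw [show k + 2 = (k + 1) + 1 by rfl, Finset.prod_Icc_succ_top (by omega : j + 1 ≤ k + 2)]
      ring
    rw [Finset.sum_congr rfl hstep, ← Finset.sum_mul, ih]
    rw [Finset.Icc_self, Finset.prod_singleton]
    ring

lemma one_sub_X_unit : (1 - (X : PowerSeries ℚ)) * (1 - X)⁻¹ = 1 := by
  have := one_sub_X_pow_unit 1 le_rfl
  rwa [pow_one] at this

lemma inv_prod_mul (s : Finset ℕ) (h : ∀ i ∈ s, 1 ≤ i) :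
    (∏ i ∈ s, (1 - (X : PowerSeries ℚ) ^ i)⁻¹) * (∏ i ∈ s, (1 - (X : PowerSeries ℚ) ^ i))
      = 1 := by
  rw [← Finset.prod_mul_distrib]
  exact Finset.prod_eq_one fun i hi => by
    rw [mul_comm]; exact one_sub_X_pow_unit i (h i hi)

lemma prod_split (k j : ℕ) (hj : j ≤ k + 1) :
    (∏ i ∈ Finset.Icc 1 j, (1 - (X : PowerSeries ℚ) ^ i))
        * ∏ i ∈ Finset.Icc (j + 1) (k + 1), (1 - (X : PowerSeries ℚ) ^ i)
      = ∏ i ∈ Finset.Icc 1 (k + 1), (1 - (X : PowerSeries ℚ) ^ i) := by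
  rw [show Finset.Icc 1 j = Finset.Ioc 0 j by rw [← Finset.Icc_add_one_left_eq_Ioc, zero_add]]
  rw [show Finset.Icc (j + 1) (k + 1) = Finset.Ioc j (k + 1) by rw [← Finset.Icc_add_one_left_eq_Ioc]]
  rw [show Finset.Icc 1 (k + 1) = Finset.Ioc 0 (k + 1) by rw [← Finset.Icc_add_one_left_eq_Ioc, zero_add]]
  exact Finset.prod_Ioc_consecutive _ (Nat.zero_le j) hj

lemma hook_final (k : ℕ) :
    hookGF k 1
      = (1 + (X : PowerSeries ℚ) ^ (k + 2)
            * ∑ j ∈ Finset.range k, (X : PowerSeries ℚ) ^ j)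
          * ∏ i ∈ Finset.Icc 1 (k + 1), (1 - (X : PowerSeries ℚ) ^ i)⁻¹ := by
  set P := ∏ i ∈ Finset.Icc 1 (k + 1), (1 - (X : PowerSeries ℚ) ^ i) with hP
  have hPconst : constantCoeff ((1 - X) * P) = 1 := by
    rw [map_mul, hP, map_prod]
    rw [Finset.prod_eq_one (fun i hi => constCoeff_one_sub_X_pow' i (by
      rw [Finset.mem_Icc] at hi; omega))]
    have := constCoeff_one_sub_X_pow' 1 le_rfl
    rw [pow_one] at this
    rw [this, mul_one]
  have hU0 : (1 - (X : PowerSeries ℚ)) * P ≠ 0 := by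
    intro h0
    rw [h0, map_zero] at hPconst
    exact zero_ne_one hPconst
  apply mul_right_cancel₀ hU0
  rw [hookGF_eq_sum]
  have hterm : ∀ j ∈ Finset.range (k + 1),
      (PowerSeries.mk fun n => (cntBig j n : ℚ))
        = (X : PowerSeries ℚ) ^ (2 * j) * ((1 - X)⁻¹ * ∏ i ∈ Finset.Icc 1 j, (1 - X ^ i)⁻¹) := by
    intro j _
    rw [serBig_eq, serLE_eq]
  rw [Finset.sum_congr rfl hterm, Finset.sum_mul]
  have hterm2 : ∀ j ∈ Finset.range (k + 1),
      ((X : PowerSeries ℚ) ^ (2 * j)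
          * ((1 - X)⁻¹ * ∏ i ∈ Finset.Icc 1 j, (1 - X ^ i)⁻¹)) * ((1 - X) * P)
        = (X : PowerSeries ℚ) ^ (2 * j)
            * ∏ i ∈ Finset.Icc (j + 1) (k + 1), (1 - X ^ i) := by
    intro j hj
    rw [Finset.mem_range] at hj
    calc ((X : PowerSeries ℚ) ^ (2 * j)
          * ((1 - X)⁻¹ * ∏ i ∈ Finset.Icc 1 j, (1 - X ^ i)⁻¹)) * ((1 - X) * P)
        = ((1 - X) * (1 - X)⁻¹)
            * (((∏ i ∈ Finset.Icc 1 j, (1 - X ^ i)⁻¹)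
                * ∏ i ∈ Finset.Icc 1 j, (1 - X ^ i))
              * ((X : PowerSeries ℚ) ^ (2 * j)
                  * ∏ i ∈ Finset.Icc (j + 1) (k + 1), (1 - X ^ i))) := by
          rw [hP, ← prod_split k j (by omega)]
          ring
      _ = _ := by
          rw [one_sub_X_unit, inv_prod_mul _ (fun i hi => by
            rw [Finset.mem_Icc] at hi; omega), one_mul, one_mul]
  rw [Finset.sum_congr rfl hterm2, poly_id]
  have hrhs : ((1 + (X : PowerSeries ℚ) ^ (k + 2)
          * ∑ j ∈ Finset.range k, (X : PowerSeries ℚ) ^ j)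
        * ∏ i ∈ Finset.Icc 1 (k + 1), (1 - (X : PowerSeries ℚ) ^ i)⁻¹) * ((1 - X) * P)
      = (1 + (X : PowerSeries ℚ) ^ (k + 2)
          * ∑ j ∈ Finset.range k, (X : PowerSeries ℚ) ^ j) * (1 - X) := by
    calc _ = ((∏ i ∈ Finset.Icc 1 (k + 1), (1 - (X : PowerSeries ℚ) ^ i)⁻¹) * P)
          * ((1 + (X : PowerSeries ℚ) ^ (k + 2)
              * ∑ j ∈ Finset.range k, (X : PowerSeries ℚ) ^ j) * (1 - X)) := by ring
      _ = _ := by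
          rw [hP, inv_prod_mul _ (fun i hi => by
            rw [Finset.mem_Icc] at hi; omega), one_mul]
  rw [hrhs]
  have hgeom : (1 - (X : PowerSeries ℚ)) * ∑ j ∈ Finset.range k, (X : PowerSeries ℚ) ^ j
      = 1 - X ^ k := by
    have h := mul_geom_sum (X : PowerSeries ℚ) k
    linear_combination -h
  have : (2 : ℕ) * k + 2 = (k + 2) + k := by omega
  rw [this]
  linear_combination -((X : PowerSeries ℚ) ^ (k + 2) * hgeom)

theorem stmt14 (k : ℕ) :
    A k 1 = 1 + (PowerSeries.X : PowerSeries ℚ) ^ (k + 2) * gaussBinom k 1 ∧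
    A k 1 = 1 + (PowerSeries.X : PowerSeries ℚ) ^ (k + 2)
              * ∑ j ∈ Finset.range k, (PowerSeries.X : PowerSeries ℚ) ^ j ∧
    hookGF k 1
      = (1 + (PowerSeries.X : PowerSeries ℚ) ^ (k + 2)
              * ∑ j ∈ Finset.range k, (PowerSeries.X : PowerSeries ℚ) ^ j)
        * ∏ i ∈ Finset.Icc 1 (k + 1), (1 - (PowerSeries.X : PowerSeries ℚ) ^ i)⁻¹ := by
  refine ⟨A_k1 k, ?_, hook_final k⟩
  rw [A_k1 k, gaussBinom_one k]
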